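/- Let n ≥ 2 and let {|y_{x_y}⟩}_{x_y=1}^d (y = 1,…,n) be any n orthonormal bases of ℂ^d. Then ∑_{x ∈ [d]^n} ∑_{σ ∈ S_n, σ an n-cycle} ∏_{y=1}^n ⟨y_{x_y}|σ(y)_{x_{σ(y)}}⟩ = (n−1)!·d. Consequently, if the quantity ∑_{σ an n-cycle} ∏_{y=1}^n ⟨y_{x_y}|σ(y)_{x_{σ(y)}}⟩ takes the same value for every x ∈ [d]^n, that common value must be (n−1)!/d^{n−1}. -/

import Mathlib

open scoped InnerProductSpace

open scoped Classical in
/-- The set of full cycles (`card ι`-cycles) in the permutation group of `ι`. -/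
noncomputable def nCycles (ι : Type) [Fintype ι] [DecidableEq ι] : Finset (Equiv.Perm ι) :=
  Finset.univ.filter fun σ => σ.IsCycle ∧ σ.support = Finset.univ

namespace Stmt6Aux

variable {d : ℕ}

open Fin.NatCast

/-- Telescoping chain sum for orthonormal bases. -/
lemma chain_sum : ∀ (m : ℕ) (C : Fin m → OrthonormalBasis (Fin d) ℂ (EuclideanSpace ℂ (Fin d)))
    (u v : EuclideanSpace ℂ (Fin d)),
    (∑ a : Fin m → Fin d,
      (∏ k : Fin m,
        ⟪(Fin.cons u fun i => C i (a i) : Fin (m+1) → EuclideanSpace ℂ (Fin d)) k.castSucc,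
         (Fin.cons u fun i => C i (a i) : Fin (m+1) → EuclideanSpace ℂ (Fin d)) k.succ⟫_ℂ)
        * ⟪(Fin.cons u fun i => C i (a i) : Fin (m+1) → EuclideanSpace ℂ (Fin d)) (Fin.last m),
            v⟫_ℂ)
    = ⟪u, v⟫_ℂ := by
  intro m
  induction m with
  | zero => intro C u v; simp
  | succ m ih =>
    intro C u v
    rw [← Equiv.sum_comp (Fin.consEquiv fun _ : Fin (m+1) => Fin d)]
    rw [Fintype.sum_prod_type]
    have key : ∀ (j : Fin d) (a' : Fin m → Fin d),
        (Fin.cons u (fun i => C i ((Fin.consEquiv fun _ : Fin (m+1) => Fin d) (j, a') i))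
          : Fin (m+2) → EuclideanSpace ℂ (Fin d)) ∘ Fin.succ
        = (Fin.cons (C 0 j) (fun i => C i.succ (a' i))
          : Fin (m+1) → EuclideanSpace ℂ (Fin d)) := by
      intro j a'
      funext k
      induction k using Fin.cases with
      | zero => simp
      | succ i => simp
    have step : ∀ j : Fin d,
        (∑ a' : Fin m → Fin d,
          (∏ k : Fin (m+1),
            ⟪(Fin.cons u fun i => C i ((Fin.consEquiv fun _ : Fin (m+1) => Fin d) (j, a') i)
              : Fin (m+2) → EuclideanSpace ℂ (Fin d)) k.castSucc,
             (Fin.cons u fun i => C i ((Fin.consEquiv fun _ : Fin (m+1) => Fin d) (j, a') i) : Fin (m+2) → EuclideanSpace ℂ (Fin d)) k.succ⟫_ℂ)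
          * ⟪(Fin.cons u fun i => C i ((Fin.consEquiv fun _ : Fin (m+1) => Fin d) (j, a') i)
              : Fin (m+2) → EuclideanSpace ℂ (Fin d)) (Fin.last (m+1)), v⟫_ℂ)
        = ⟪u, C 0 j⟫_ℂ * ⟪C 0 j, v⟫_ℂ := by
      intro j
      have hterm : ∀ a' : Fin m → Fin d,
          (∏ k : Fin (m+1),
            ⟪(Fin.cons u fun i => C i ((Fin.consEquiv fun _ : Fin (m+1) => Fin d) (j, a') i)
              : Fin (m+2) → EuclideanSpace ℂ (Fin d)) k.castSucc,
             (Fin.cons u fun i => C i ((Fin.consEquiv fun _ : Fin (m+1) => Fin d) (j, a') i) : Fin (m+2) → EuclideanSpace ℂ (Fin d)) k.succ⟫_ℂ)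
          * ⟪(Fin.cons u fun i => C i ((Fin.consEquiv fun _ : Fin (m+1) => Fin d) (j, a') i)
              : Fin (m+2) → EuclideanSpace ℂ (Fin d)) (Fin.last (m+1)), v⟫_ℂ
          = ⟪u, C 0 j⟫_ℂ *
            ((∏ k : Fin m,
              ⟪(Fin.cons (C 0 j) fun i => C i.succ (a' i)
                : Fin (m+1) → EuclideanSpace ℂ (Fin d)) k.castSucc,
               (Fin.cons (C 0 j) fun i => C i.succ (a' i) : Fin (m+1) → EuclideanSpace ℂ (Fin d)) k.succ⟫_ℂ)
            * ⟪(Fin.cons (C 0 j) fun i => C i.succ (a' i) : Fin (m+1) → EuclideanSpace ℂ (Fin d)) (Fin.last m), v⟫_ℂ) := by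
        intro a'
        have hV := key j a'
        rw [Fin.prod_univ_succ]
        have h0 : ((Fin.cons u fun i => C i ((Fin.consEquiv fun _ : Fin (m+1) => Fin d) (j, a') i)
            : Fin (m+2) → EuclideanSpace ℂ (Fin d)) (0 : Fin (m+1)).castSucc) = u := by
          simp
        have h1 : ((Fin.cons u fun i => C i ((Fin.consEquiv fun _ : Fin (m+1) => Fin d) (j, a') i)
            : Fin (m+2) → EuclideanSpace ℂ (Fin d)) (0 : Fin (m+1)).succ) = C 0 j := by
          have := congrFun hV 0
          simpa using this
        have h2 : ∀ k : Fin m,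
            ((Fin.cons u fun i => C i ((Fin.consEquiv fun _ : Fin (m+1) => Fin d) (j, a') i)
              : Fin (m+2) → EuclideanSpace ℂ (Fin d)) k.succ.castSucc)
            = (Fin.cons (C 0 j) fun i => C i.succ (a' i) : Fin (m+1) → _) k.castSucc := by
          intro k
          rw [← Fin.succ_castSucc]
          exact congrFun hV k.castSucc
        have h3 : ∀ k : Fin m,
            ((Fin.cons u fun i => C i ((Fin.consEquiv fun _ : Fin (m+1) => Fin d) (j, a') i)
              : Fin (m+2) → EuclideanSpace ℂ (Fin d)) k.succ.succ)
            = (Fin.cons (C 0 j) fun i => C i.succ (a' i) : Fin (m+1) → _) k.succ :=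
          fun k => congrFun hV k.succ
        have h4 : ((Fin.cons u fun i => C i ((Fin.consEquiv fun _ : Fin (m+1) => Fin d) (j, a') i)
            : Fin (m+2) → EuclideanSpace ℂ (Fin d)) (Fin.last (m+1)))
            = (Fin.cons (C 0 j) fun i => C i.succ (a' i) : Fin (m+1) → _) (Fin.last m) := by
          rw [← Fin.succ_last]
          exact congrFun hV (Fin.last m)
        rw [h0, h1, h4]
        rw [Finset.prod_congr rfl fun k _ => by rw [h2 k, h3 k]]
        ring
      rw [Finset.sum_congr rfl fun a' _ => hterm a', ← Finset.mul_sum, ih]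
    rw [Finset.sum_congr rfl fun j _ => step j]
    exact (C 0).sum_inner_mul_inner u v

/-- Cyclic chain sum equals `d`. -/
lemma cyclic_sum (m : ℕ) (C : Fin (m+1) → OrthonormalBasis (Fin d) ℂ (EuclideanSpace ℂ (Fin d))) :
    (∑ a : Fin (m+1) → Fin d, ∏ k : Fin (m+1), ⟪C k (a k), C (k+1) (a (k+1))⟫_ℂ) = (d : ℂ) := by
  rw [← Equiv.sum_comp (Fin.consEquiv fun _ : Fin (m+1) => Fin d)]
  rw [Fintype.sum_prod_type]
  have hcs : ∀ k : Fin m, (k.castSucc : Fin (m+1)) + 1 = k.succ := by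
    intro k
    apply Fin.ext
    rw [Fin.val_add_one_of_lt (Fin.castSucc_lt_last k)]
    simp
  have hlast : (Fin.last m : Fin (m+1)) + 1 = 0 := by
    apply Fin.ext
    simp [Fin.add_def]
  have step : ∀ j : Fin d,
      (∑ a' : Fin m → Fin d, ∏ k : Fin (m+1),
        ⟪C k ((Fin.consEquiv fun _ : Fin (m+1) => Fin d) (j, a') k),
         C (k+1) ((Fin.consEquiv fun _ : Fin (m+1) => Fin d) (j, a') (k+1))⟫_ℂ)
      = ⟪C 0 j, C 0 j⟫_ℂ := by
    intro j
    have hW : ∀ (a' : Fin m → Fin d) (k : Fin (m+1)),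
        C k ((Fin.consEquiv fun _ : Fin (m+1) => Fin d) (j, a') k)
        = (Fin.cons (C 0 j) (fun i => C i.succ (a' i))
            : Fin (m+1) → EuclideanSpace ℂ (Fin d)) k := by
      intro a' k
      induction k using Fin.cases with
      | zero => simp
      | succ i => simp
    have hterm : ∀ a' : Fin m → Fin d,
        (∏ k : Fin (m+1),
          ⟪C k ((Fin.consEquiv fun _ : Fin (m+1) => Fin d) (j, a') k),
           C (k+1) ((Fin.consEquiv fun _ : Fin (m+1) => Fin d) (j, a') (k+1))⟫_ℂ)
        = (∏ k : Fin m,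
            ⟪(Fin.cons (C 0 j) fun i => C i.succ (a' i)
              : Fin (m+1) → EuclideanSpace ℂ (Fin d)) k.castSucc,
             (Fin.cons (C 0 j) fun i => C i.succ (a' i) : Fin (m+1) → EuclideanSpace ℂ (Fin d)) k.succ⟫_ℂ)
          * ⟪(Fin.cons (C 0 j) fun i => C i.succ (a' i) : Fin (m+1) → EuclideanSpace ℂ (Fin d)) (Fin.last m), C 0 j⟫_ℂ := by
      intro a'
      rw [Fin.prod_univ_castSucc]
      congr 1
      · refine Finset.prod_congr rfl fun k _ => ?_
        rw [hW a' k.castSucc, hcs k, hW a' k.succ]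
      · rw [hW a' (Fin.last m), hlast, hW a' 0]
        simp
    rw [Finset.sum_congr rfl fun a' _ => hterm a']
    exact chain_sum m (fun i => C i.succ) (C 0 j) (C 0 j)
  rw [Finset.sum_congr rfl fun j _ => step j]
  have : ∀ j : Fin d, ⟪C 0 j, C 0 j⟫_ℂ = 1 := by
    intro j
    have := orthonormal_iff_ite.mp (C 0).orthonormal j j
    simpa using this
  rw [Finset.sum_congr rfl fun j _ => this j]
  simp

/-- From a full cycle, an indexing permutation. -/
lemma sigma_equiv (m : ℕ) (σ : Equiv.Perm (Fin (m+2))) (h1 : σ.IsCycle)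
    (h2 : σ.support = Finset.univ) :
    ∃ E : Equiv.Perm (Fin (m+2)), E 0 = 0 ∧ (∀ k : ℕ, E (k : Fin (m+2)) = (σ ^ k) 0)
      ∧ ∀ k : Fin (m+2), σ (E k) = E (k + 1) := by
  have horder : orderOf σ = m + 2 := by
    rw [h1.orderOf, h2, Finset.card_univ, Fintype.card_fin]
  have hmoves : ∀ y : Fin (m+2), σ y ≠ y := by
    intro y
    have : y ∈ σ.support := by rw [h2]; exact Finset.mem_univ y
    exact Equiv.Perm.mem_support.mp this
  set e : Fin (m+2) → Fin (m+2) := fun k => (σ ^ (k : ℕ)) 0 with he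
  have hsurj : Function.Surjective e := by
    intro y
    obtain ⟨i, hi⟩ := h1.exists_pow_eq (hmoves 0) (hmoves y)
    refine ⟨⟨i % (m+2), Nat.mod_lt _ (by omega)⟩, ?_⟩
    show (σ ^ (i % (m+2))) 0 = y
    have hp := pow_mod_orderOf σ i
    rw [horder] at hp
    rw [hp, hi]
  have hbij : Function.Bijective e := Finite.surjective_iff_bijective.mp hsurj
  refine ⟨Equiv.ofBijective e hbij, by simp [he], fun k => ?_, fun k => ?_⟩
  · show e (k : Fin (m+2)) = (σ ^ k) 0
    rw [he]
    simp only
    rw [Fin.val_natCast]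
    have hp := pow_mod_orderOf σ k
    rw [horder] at hp
    rw [hp]
  · show σ (e k) = e (k + 1)
    rw [he]
    simp only
    have hval : ((k + 1 : Fin (m+2)) : ℕ) = ((k : ℕ) + 1) % (m + 2) := by
      rw [Fin.val_add, Fin.val_one]
    rw [hval]
    have hp := pow_mod_orderOf σ ((k:ℕ) + 1)
    rw [horder] at hp
    rw [hp, pow_succ']
    simp [Equiv.Perm.mul_apply]

lemma finRotate_pow (m : ℕ) : ∀ k : ℕ, ((finRotate (m+2)) ^ k) 0 = (k : Fin (m+2)) := by
  intro k
  induction k with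
  | zero => simp
  | succ k ih =>
    rw [pow_succ', Equiv.Perm.mul_apply, ih, finRotate_succ_apply]
    push_cast
    ring

lemma card_nCycles (m : ℕ) : (nCycles (Fin (m+2))).card = (m+1).factorial := by
  classical
  have : (Finset.univ : Finset (Equiv.Perm (Fin (m+1)))).card = (nCycles (Fin (m+2))).card := by
    refine Finset.card_bij
      (fun τ _ => (Equiv.Perm.decomposeFin.symm (0, τ)) * finRotate (m+2)
        * (Equiv.Perm.decomposeFin.symm (0, τ))⁻¹) ?_ ?_ ?_
    · intro τ _
      rw [nCycles, Finset.mem_filter]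
      refine ⟨Finset.mem_univ _, isCycle_finRotate.conj, ?_⟩
      rw [Equiv.Perm.support_conj, support_finRotate]
      exact Finset.map_univ_equiv _
    · intro τ1 _ τ2 _ hh
      have key : ∀ τ : Equiv.Perm (Fin (m+1)), ∀ k : ℕ,
          ((Equiv.Perm.decomposeFin.symm (0, τ) * finRotate (m+2)
            * (Equiv.Perm.decomposeFin.symm (0, τ))⁻¹) ^ k) 0
          = Equiv.Perm.decomposeFin.symm (0, τ) (k : Fin (m+2)) := by
        intro τ k
        rw [conj_pow]
        have hz : (Equiv.Perm.decomposeFin.symm (0, τ))⁻¹ 0 = 0 := by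
          rw [Equiv.Perm.inv_eq_iff_eq, Equiv.Perm.decomposeFin_symm_apply_zero]
        rw [Equiv.Perm.mul_apply, Equiv.Perm.mul_apply, hz, finRotate_pow]
      have heq : Equiv.Perm.decomposeFin.symm ((0 : Fin (m+2)), τ1)
          = Equiv.Perm.decomposeFin.symm (0, τ2) := by
        apply Equiv.ext
        intro x
        have hx : x = ((x : ℕ) : Fin (m+2)) := by simp [Fin.cast_val_eq_self]
        rw [hx, ← key τ1, ← key τ2, hh]
      have := Equiv.Perm.decomposeFin.symm.injective heq
      exact (Prod.mk.injEq _ _ _ _).mp this |>.2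
    · intro σ hσ
      rw [nCycles, Finset.mem_filter] at hσ
      obtain ⟨E, hE0, hEcast, hEstep⟩ := sigma_equiv m σ hσ.2.1 hσ.2.2
      refine ⟨(Equiv.Perm.decomposeFin E).2, Finset.mem_univ _, ?_⟩
      have hfst : (Equiv.Perm.decomposeFin E).1 = 0 := by
        conv_lhs => rw [← Equiv.Perm.decomposeFin_symm_apply_zero
          (Equiv.Perm.decomposeFin E).1 (Equiv.Perm.decomposeFin E).2, Prod.mk.eta,
          Equiv.symm_apply_apply]
        exact hE0
      have hE : Equiv.Perm.decomposeFin.symm ((0 : Fin (m+2)), (Equiv.Perm.decomposeFin E).2)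
          = E := by
        rw [← hfst]
        rw [Prod.mk.eta]
        exact Equiv.Perm.decomposeFin.symm_apply_apply E
      rw [hE]
      apply Equiv.ext
      intro x
      rw [Equiv.Perm.mul_apply, Equiv.Perm.mul_apply, finRotate_succ_apply]
      have := hEstep (E⁻¹ x)
      rw [Equiv.Perm.inv_def, Equiv.apply_symm_apply, ← Equiv.Perm.inv_def] at this
      rw [← this]
  rw [← this, Finset.card_univ, Fintype.card_perm, Fintype.card_fin]

end Stmt6Aux

/-- For any `n ≥ 2` orthonormal bases of `ℂ^d`, summing the `n`-cycle overlap expression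
over all index tuples gives `(n−1)!·d`; consequently, if that expression has the same value
for every index tuple, this common value is `(n−1)!/d^(n−1)`. -/
theorem stmt_6 (n d : ℕ) (hn : 2 ≤ n) (hd : 1 ≤ d)
    (B : Fin n → OrthonormalBasis (Fin d) ℂ (EuclideanSpace ℂ (Fin d))) :
    ((∑ x : Fin n → Fin d, ∑ σ ∈ nCycles (Fin n),
        ∏ y, ⟪B y (x y), B (σ y) (x (σ y))⟫_ℂ)
      = ((n - 1).factorial : ℂ) * d) ∧
    (∀ v : ℂ, (∀ x : Fin n → Fin d,
        (∑ σ ∈ nCycles (Fin n), ∏ y, ⟪B y (x y), B (σ y) (x (σ y))⟫_ℂ) = v) →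
      v = ((n - 1).factorial : ℂ) / (d : ℂ) ^ (n - 1)) := by
  classical
  obtain ⟨m, rfl⟩ : ∃ m, n = m + 2 := ⟨n - 2, by omega⟩
  have hd0 : (d : ℂ) ≠ 0 := Nat.cast_ne_zero.mpr (by omega)
  have hfac : m + 2 - 1 = m + 1 := rfl
  have hinner : ∀ σ ∈ nCycles (Fin (m+2)),
      (∑ x : Fin (m+2) → Fin d, ∏ y, ⟪B y (x y), B (σ y) (x (σ y))⟫_ℂ) = (d : ℂ) := by
    intro σ hσ
    rw [nCycles, Finset.mem_filter] at hσ
    obtain ⟨E, hE0, hEcast, hEstep⟩ := Stmt6Aux.sigma_equiv m σ hσ.2.1 hσ.2.2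
    have hre : (∑ x : Fin (m+2) → Fin d, ∏ y, ⟪B y (x y), B (σ y) (x (σ y))⟫_ℂ)
        = ∑ a : Fin (m+2) → Fin d, ∏ k : Fin (m+2),
            ⟪B (E k) (a k), B (E (k+1)) (a (k+1))⟫_ℂ := by
      apply Fintype.sum_equiv (Equiv.arrowCongr E.symm (Equiv.refl (Fin d)))
      intro x
      refine (Fintype.prod_equiv E
        (fun k => ⟪B (E k) ((Equiv.arrowCongr E.symm (Equiv.refl (Fin d)) x) k),
          B (E (k+1)) ((Equiv.arrowCongr E.symm (Equiv.refl (Fin d)) x) (k+1))⟫_ℂ)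
        (fun y => ⟪B y (x y), B (σ y) (x (σ y))⟫_ℂ) ?_).symm
      intro k
      simp only [Equiv.arrowCongr_apply, Equiv.refl_apply, Function.comp_apply,
        Equiv.symm_symm, Equiv.refl_symm]
      rw [hEstep k]
    rw [hre]
    exact Stmt6Aux.cyclic_sum (m+1) (fun k => B (E k))
  have h1 : (∑ x : Fin (m+2) → Fin d, ∑ σ ∈ nCycles (Fin (m+2)),
      ∏ y, ⟪B y (x y), B (σ y) (x (σ y))⟫_ℂ) = ((m+1).factorial : ℂ) * d := by
    rw [Finset.sum_comm, Finset.sum_congr rfl hinner, Finset.sum_const,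
      Stmt6Aux.card_nCycles, nsmul_eq_mul]
  refine ⟨by rw [hfac]; exact h1, ?_⟩
  intro v hv
  have hs : (∑ _x : Fin (m+2) → Fin d, v) = ((m+1).factorial : ℂ) * d := by
    rw [← h1]
    exact Finset.sum_congr rfl fun x _ => (hv x).symm
  rw [Finset.sum_const, Finset.card_univ] at hs
  simp only [Fintype.card_fun, Fintype.card_fin, nsmul_eq_mul] at hs
  push_cast at hs
  rw [hfac, eq_div_iff (pow_ne_zero _ hd0)]
  apply mul_right_cancel₀ hd0
  linear_combination hs
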